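/- Let A be a Hermitian operator on a finite-dimensional Hilbert space with spectral radius 1, second largest eigenvalue modulus λ < 1, maximal eigenspace A_max with orthogonal projection P_max, and let U be unitary with ‖P_max U v‖ ≤ d‖v‖ for all v ∈ A_max, where 0 ≤ d < 1. Then there exists a constant g(λ, d) < 1 (depending only on λ and d) such that ‖(UA)² v‖ ≤ g(λ, d) ‖v‖ for every vector v; consequently ‖(UA)^k‖_op ≤ g(λ,d)^{⌊k/2⌋}. -/

import Mathlib

open scoped ComplexInnerProductSpace

lemma sq_le_imp_aux (x y : ℝ) (hx : 0 ≤ x) (hy : 0 ≤ y) (h : x^2 ≤ y^2) : x ≤ y := by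
  nlinarith

set_option maxHeartbeats 1000000 in
lemma scalar_key_aux (lam d a b p s r : ℝ) (hlam0 : 0 ≤ lam) (hlam1 : lam < 1)
    (hd0 : 0 ≤ d) (hd1 : d < 1)
    (ha : 0 ≤ a) (hb : 0 ≤ b) (hp : 0 ≤ p) (hs : 0 ≤ s) (hr : 0 ≤ r)
    (habr : a^2 + b^2 = r^2)
    (hpd : p ≤ d*a + lam*b)
    (hps : p ≤ s)
    (hs2 : s^2 ≤ a^2 + lam^2*b^2) :
    (1-lam^2)*p^2 + lam^2*s^2 ≤ (1 - (1-lam^2)*((1-d)/2)^2) * r^2 := by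
  have hl2 : lam^2 < 1 := by nlinarith
  have hc1 : (0:ℝ) ≤ 1 - lam^2 := by linarith
  by_cases hc : b ≤ (1-d)/2 * r
  · have har : a ≤ r := by nlinarith
    have hpr : p ≤ (1+d)/2 * r := by nlinarith
    have hp2 : p^2 ≤ ((1+d)/2)^2 * r^2 := by nlinarith
    have hs2' : s^2 ≤ r^2 := by nlinarith
    have key : (1-lam^2) * (((1+d)/2)^2 * r^2) + lam^2 * r^2
        ≤ (1 - (1-lam^2)*((1-d)/2)^2) * r^2 := by
      nlinarith [mul_nonneg (mul_nonneg hc1 (by nlinarith : (0:ℝ) ≤ 1 - d^2)) (sq_nonneg r)]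
    have h1 : (1-lam^2)*p^2 ≤ (1-lam^2) * (((1+d)/2)^2 * r^2) :=
      mul_le_mul_of_nonneg_left hp2 hc1
    have h2 : lam^2*s^2 ≤ lam^2 * r^2 := mul_le_mul_of_nonneg_left hs2' (sq_nonneg lam)
    linarith
  · push_neg at hc
    have h0 : (0:ℝ) ≤ (1-d)/2 * r := mul_nonneg (by linarith) hr
    have hb2 : ((1-d)/2 * r)^2 ≤ b^2 := pow_le_pow_left₀ h0 hc.le 2
    have hps2 : p^2 ≤ s^2 := pow_le_pow_left₀ hp hps 2
    have h1' := mul_le_mul_of_nonneg_left hps2 hc1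
    have h1 : (1-lam^2)*p^2 + lam^2*s^2 ≤ s^2 := by nlinarith [h1']
    have h2 : (1-lam^2) * (((1-d)/2 * r)^2) ≤ (1-lam^2) * b^2 :=
      mul_le_mul_of_nonneg_left hb2 hc1
    nlinarith [sq_nonneg b]

set_option maxHeartbeats 2000000 in
theorem stmt_11 {E : Type*} [NormedAddCommGroup E] [InnerProductSpace ℂ E]
    [FiniteDimensional ℂ E]
    (A : E →L[ℂ] E) (hA : IsSelfAdjoint A)
    (hrad : spectralRadius ℂ A = 1)
    (V : Submodule ℂ E)
    (hVinv : ∀ x ∈ V, A x ∈ V) (hViso : ∀ x ∈ V, ‖A x‖ = ‖x‖)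
    (lam : ℝ) (hlam0 : 0 ≤ lam) (hlam1 : lam < 1)
    (hperp : ∀ y ∈ Vᗮ, A y ∈ Vᗮ ∧ ‖A y‖ ≤ lam * ‖y‖)
    (U : E →L[ℂ] E) (hU : U ∈ unitary (E →L[ℂ] E))
    (d : ℝ) (hd0 : 0 ≤ d) (hd1 : d < 1)
    (hcontr : ∀ v ∈ V, ‖(Submodule.orthogonalProjection V (U v) : E)‖ ≤ d * ‖v‖) :
    ∃ g : ℝ, 0 ≤ g ∧ g < 1 ∧
      (∀ v : E, ‖((U * A) ^ 2) v‖ ≤ g * ‖v‖) ∧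
      ∀ k : ℕ, ‖(U * A) ^ k‖ ≤ g ^ (k / 2) := by
  -- norm of A is 1
  have hAnn : ‖A‖₊ = 1 := by
    have h := hA.spectralRadius_eq_nnnorm
    rw [hrad] at h
    exact ENNReal.coe_eq_one.mp h.symm
  have hAnorm : ‖A‖ = 1 := by
    rw [← coe_nnnorm, hAnn, NNReal.coe_one]
  have hUiso : ∀ z : E, ‖U z‖ = ‖z‖ := fun z =>
    ContinuousLinearMap.norm_map_of_mem_unitary hU z
  -- Pythagoras with respect to V
  have pyth : ∀ z : E, ‖z‖^2 = ‖(Submodule.orthogonalProjection V z : E)‖^2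
      + ‖z - (Submodule.orthogonalProjection V z : E)‖^2 := by
    intro z
    have hz : (Submodule.orthogonalProjection V z : E) + (z - (Submodule.orthogonalProjection V z : E)) = z := by
      abel
    have hi : ⟪(Submodule.orthogonalProjection V z : E), z - (Submodule.orthogonalProjection V z : E)⟫ = 0 :=
      Submodule.inner_right_of_mem_orthogonal (SetLike.coe_mem _)
        (Submodule.sub_starProjection_mem_orthogonal (K := V) z)
    have := norm_add_sq_eq_norm_sq_add_norm_sq_of_inner_eq_zero
      (𝕜 := ℂ) (Submodule.orthogonalProjection V z : E) (z - (Submodule.orthogonalProjection V z : E)) hi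
    rw [hz] at this
    rw [pow_two, pow_two, pow_two, this]
  -- projection is norm-nonincreasing
  have hPle : ∀ z : E, ‖(Submodule.orthogonalProjection V z : E)‖ ≤ ‖z‖ := by
    intro z
    have h := pyth z
    have h2 : ‖(Submodule.orthogonalProjection V z : E)‖^2 ≤ ‖z‖^2 := by
      have h3 := sq_nonneg ‖z - (Submodule.orthogonalProjection V z : E)‖
      linarith
    exact sq_le_imp_aux _ _ (norm_nonneg _) (norm_nonneg z) h2
  -- the constant
  set G : ℝ := 1 - (1-lam^2)*((1-d)/2)^2 with hGdef
  have hq0 : (0:ℝ) < ((1-d)/2)^2 := by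
    have : (0:ℝ) < (1-d)/2 := by linarith
    positivity
  have hq1 : ((1-d)/2)^2 ≤ 1 := by nlinarith
  have hll : (0:ℝ) < 1-lam^2 := by nlinarith
  have hl1 : (1:ℝ)-lam^2 ≤ 1 := by nlinarith
  have hmul : (1-lam^2)*((1-d)/2)^2 ≤ 1 := mul_le_one₀ hl1 hq0.le hq1
  have hGnn : 0 ≤ G := by rw [hGdef]; linarith
  have hGlt : G < 1 := by
    rw [hGdef]
    have := mul_pos hll hq0
    linarith
  set g : ℝ := Real.sqrt G with hgdef
  have hg0 : 0 ≤ g := Real.sqrt_nonneg _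
  have hgsq : g^2 = G := Real.sq_sqrt hGnn
  have hg1 : g < 1 := by
    have : g^2 < 1 := by rw [hgsq]; exact hGlt
    nlinarith [hg0]
  -- main two-step estimate
  have main : ∀ v : E, ‖((U * A) ^ 2) v‖ ≤ g * ‖v‖ := by
    intro v
    set x : E := (Submodule.orthogonalProjection V v : E) with hxdef
    set y : E := v - x with hydef
    have hxV : x ∈ V := SetLike.coe_mem _
    have hyV : y ∈ Vᗮ := Submodule.sub_starProjection_mem_orthogonal (K := V) v
    have hv : v = x + y := by rw [hydef]; abel
    have hvsq : ‖x‖^2 + ‖y‖^2 = ‖v‖^2 := (pyth v).symm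
    set w : E := U (A v) with hwdef
    have hAv : A v = A x + A y := by rw [hv, map_add]
    have hw : w = U (A x) + U (A y) := by rw [hwdef, hAv, map_add]
    -- bound on ‖P w‖
    have hAxV : A x ∈ V := hVinv x hxV
    have hAyV : A y ∈ Vᗮ := (hperp y hyV).1
    have hAynorm : ‖A y‖ ≤ lam * ‖y‖ := (hperp y hyV).2
    have hp1 : ‖(Submodule.orthogonalProjection V (U (A x)) : E)‖ ≤ d * ‖x‖ := by
      have := hcontr (A x) hAxV
      rwa [hViso x hxV] at this
    have hp2 : ‖(Submodule.orthogonalProjection V (U (A y)) : E)‖ ≤ lam * ‖y‖ := by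
      calc ‖(Submodule.orthogonalProjection V (U (A y)) : E)‖ ≤ ‖U (A y)‖ := hPle _
        _ = ‖A y‖ := hUiso _
        _ ≤ lam * ‖y‖ := hAynorm
    have hptri : ‖(Submodule.orthogonalProjection V w : E)‖ ≤ d * ‖x‖ + lam * ‖y‖ := by
      have heq : (Submodule.orthogonalProjection V w : E)
          = (Submodule.orthogonalProjection V (U (A x)) : E)
            + (Submodule.orthogonalProjection V (U (A y)) : E) := by
        rw [hw, map_add]; rfl
      rw [heq]
      exact le_trans (norm_add_le _ _) (add_le_add hp1 hp2)
    -- bound on ‖w‖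
    have hinAxy : ⟪A x, A y⟫ = 0 :=
      Submodule.inner_right_of_mem_orthogonal hAxV hAyV
    have hAvsq : ‖A v‖^2 = ‖A x‖^2 + ‖A y‖^2 := by
      have := norm_add_sq_eq_norm_sq_add_norm_sq_of_inner_eq_zero (𝕜 := ℂ) (A x) (A y) hinAxy
      rw [hAv, pow_two, pow_two, pow_two, this]
    have hAy2 : ‖A y‖^2 ≤ lam^2 * ‖y‖^2 := by
      have := pow_le_pow_left₀ (norm_nonneg (A y)) hAynorm 2
      calc ‖A y‖^2 ≤ (lam * ‖y‖)^2 := this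
        _ = lam^2 * ‖y‖^2 := by ring
    have hwnorm : ‖w‖ = ‖A v‖ := hUiso _
    have hs2 : ‖w‖^2 ≤ ‖x‖^2 + lam^2*‖y‖^2 := by
      rw [hwnorm, hAvsq, hViso x hxV]
      linarith
    -- decompose w
    have hpyw := pyth w
    have hps : ‖(Submodule.orthogonalProjection V w : E)‖ ≤ ‖w‖ := hPle w
    -- bound the final norm squared
    set xw : E := (Submodule.orthogonalProjection V w : E) with hxwdef
    set yw : E := w - xw with hywdef
    have hxwV : xw ∈ V := SetLike.coe_mem _
    have hywV : yw ∈ Vᗮ := Submodule.sub_starProjection_mem_orthogonal (K := V) w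
    have hAw : A w = A xw + A yw := by rw [show w = xw + yw by rw [hywdef]; abel, map_add]
    have hinw : ⟪A xw, A yw⟫ = 0 :=
      Submodule.inner_right_of_mem_orthogonal (hVinv xw hxwV) ((hperp yw hywV).1)
    have hAwsq : ‖A w‖^2 = ‖A xw‖^2 + ‖A yw‖^2 := by
      have := norm_add_sq_eq_norm_sq_add_norm_sq_of_inner_eq_zero (𝕜 := ℂ) (A xw) (A yw) hinw
      rw [hAw, pow_two, pow_two, pow_two, this]
    have hAyw2 : ‖A yw‖^2 ≤ lam^2 * ‖yw‖^2 := by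
      have h' := (hperp yw hywV).2
      have := pow_le_pow_left₀ (norm_nonneg (A yw)) h' 2
      calc ‖A yw‖^2 ≤ (lam * ‖yw‖)^2 := this
        _ = lam^2 * ‖yw‖^2 := by ring
    have hyw2 : ‖yw‖^2 = ‖w‖^2 - ‖xw‖^2 := by rw [hpyw]; ring
    have hAwbd : ‖A w‖^2 ≤ (1-lam^2)*‖xw‖^2 + lam^2*‖w‖^2 := by
      rw [hAwsq]
      have h1 : ‖A xw‖ = ‖xw‖ := hViso xw hxwV
      rw [h1]
      have hl2 : lam^2 * ‖yw‖^2 = lam^2 * ‖w‖^2 - lam^2 * ‖xw‖^2 := by rw [hyw2]; ring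
      linarith [hAyw2, hl2]
    -- scalar lemma
    have hscalar := scalar_key_aux lam d ‖x‖ ‖y‖ ‖xw‖ ‖w‖ ‖v‖ hlam0 hlam1 hd0 hd1
      (norm_nonneg x) (norm_nonneg y) (norm_nonneg xw) (norm_nonneg w) (norm_nonneg v)
      hvsq hptri hps hs2
    have hfinal2 : ‖A w‖^2 ≤ G * ‖v‖^2 := le_trans hAwbd hscalar
    -- conclude
    have heval : ‖((U * A) ^ 2) v‖ = ‖A w‖ := by
      have : ((U * A) ^ 2) v = U (A (U (A v))) := by
        simp [pow_two, ContinuousLinearMap.mul_apply]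
      rw [this, hUiso, hwdef]
    rw [heval]
    have hrhs : (g * ‖v‖)^2 = G * ‖v‖^2 := by rw [← hgsq]; ring
    have h' : ‖A w‖^2 ≤ (g * ‖v‖)^2 := by rw [hrhs]; exact hfinal2
    exact sq_le_imp_aux _ _ (norm_nonneg _) (mul_nonneg hg0 (norm_nonneg v)) h'
  refine ⟨g, hg0, hg1, main, ?_⟩
  -- operator norm bounds
  have hB2 : ‖(U * A) ^ 2‖ ≤ g := ContinuousLinearMap.opNorm_le_bound _ hg0 main
  have hB1 : ‖U * A‖ ≤ 1 := by
    apply ContinuousLinearMap.opNorm_le_bound _ zero_le_one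
    intro v
    rw [ContinuousLinearMap.mul_apply, hUiso, one_mul]
    calc ‖A v‖ ≤ ‖A‖ * ‖v‖ := A.le_opNorm v
      _ = ‖v‖ := by rw [hAnorm, one_mul]
  have hid : ‖((U * A) ^ 0 : E →L[ℂ] E)‖ ≤ 1 := by
    rw [pow_zero, ContinuousLinearMap.one_def]
    exact ContinuousLinearMap.norm_id_le
  have key2 : ∀ n : ℕ, ‖(U * A) ^ (2*n)‖ ≤ g^n ∧ ‖(U * A) ^ (2*n+1)‖ ≤ g^n := by
    intro n
    induction n with
    | zero =>
      refine ⟨?_, ?_⟩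
      · show ‖(U * A) ^ 0‖ ≤ g ^ 0
        rw [pow_zero g]
        exact hid
      · show ‖(U * A) ^ 1‖ ≤ g ^ 0
        rw [pow_one, pow_zero]
        exact hB1
    | succ n ih =>
      constructor
      · have heq : (U * A) ^ (2*(n+1)) = (U * A) ^ (2*n) * (U * A) ^ 2 := by
          rw [← pow_add]; ring_nf
        rw [heq]
        calc ‖(U * A) ^ (2*n) * (U * A) ^ 2‖ ≤ ‖(U * A) ^ (2*n)‖ * ‖(U * A) ^ 2‖ :=
              norm_mul_le _ _
          _ ≤ g^n * g := mul_le_mul ih.1 hB2 (norm_nonneg _) (pow_nonneg hg0 n)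
          _ = g^(n+1) := by ring
      · have heq : (U * A) ^ (2*(n+1)+1) = (U * A) ^ (2*n+1) * (U * A) ^ 2 := by
          rw [← pow_add]; ring_nf
        rw [heq]
        calc ‖(U * A) ^ (2*n+1) * (U * A) ^ 2‖ ≤ ‖(U * A) ^ (2*n+1)‖ * ‖(U * A) ^ 2‖ :=
              norm_mul_le _ _
          _ ≤ g^n * g := mul_le_mul ih.2 hB2 (norm_nonneg _) (pow_nonneg hg0 n)
          _ = g^(n+1) := by ring
  intro k
  rcases Nat.even_or_odd k with ⟨n, hn⟩ | ⟨n, hn⟩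
  · have h1 : k = 2*n := by omega
    have h2 : 2*n / 2 = n := by omega
    rw [h1, h2]
    exact (key2 n).1
  · have h2 : (2*n+1) / 2 = n := by omega
    rw [hn, h2]
    exact (key2 n).2
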